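/- For every integer t ≥ 0, define H_t = 27 + 7·Σ_{j=0}^{t−1} 2^{6j+8} (so H_0 = 27 and H_{t+1} = H_t + 7·2^{6t+8}) and let k = 3t + 2. Then H_t is odd, v₂(3·H_t + 1) = 1, and (3·H_t + 1)/2 = (Σ_{μ=1}^{k+1} 2^{2μ−1}) − 1. -/

import Mathlib

/-- The Collatz operation on odd positive integers:
`C n = (3n+1)/2^{v₂(3n+1)}`. -/
def collatzC (n : ℕ) : ℕ := (3 * n + 1) / 2 ^ padicValNat 2 (3 * n + 1)

lemma keyS (n : ℕ) : 3 * ∑ μ ∈ Finset.Icc 1 n, 2 ^ (2 * μ - 1) + 2 = 2 * 4 ^ n := by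
  induction n with
  | zero => simp
  | succ n ih =>
    rw [Finset.sum_Icc_succ_top (a := 1) (by omega)]
    have h : 2 * (n + 1) - 1 = 2 * n + 1 := by omega
    rw [h, pow_succ]
    have h2 : (2:ℕ) ^ (2 * n + 1) = 2 * 4 ^ n := by
      rw [pow_succ, pow_mul]; ring
    omega

lemma keyA (t : ℕ) : 63 * ∑ j ∈ Finset.range t, 2 ^ (6 * j + 8) + 256 = 256 * 64 ^ t := by
  induction t with
  | zero => simp
  | succ t ih =>
    rw [Finset.sum_range_succ]
    have h64 : (64:ℕ) ^ (t + 1) = 64 ^ t * 64 := pow_succ 64 t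
    have h : (2:ℕ) ^ (6 * t + 8) = 256 * 64 ^ t := by
      rw [pow_add, pow_mul]; norm_num [mul_comm]
    omega

lemma key (t : ℕ) :
    3 * (27 + 7 * ∑ j ∈ Finset.range t, 2 ^ (6 * j + 8)) + 3 =
      2 * ∑ μ ∈ Finset.Icc 1 (3 * t + 2 + 1), 2 ^ (2 * μ - 1) := by
  have h1 := keyS (3 * t + 2 + 1)
  have h2 := keyA t
  have h3 : (4:ℕ) ^ (3 * t + 2 + 1) = 64 * 64 ^ t := by
    have : 3 * t + 2 + 1 = 3 * (t + 1) := by omega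
    rw [this, pow_mul]; norm_num [pow_succ, mul_comm]
  omega

theorem collatz_step_of_H (t : ℕ) :
    Odd (27 + 7 * ∑ j ∈ Finset.range t, 2 ^ (6 * j + 8)) ∧
    padicValNat 2 (3 * (27 + 7 * ∑ j ∈ Finset.range t, 2 ^ (6 * j + 8)) + 1) = 1 ∧
    (3 * (27 + 7 * ∑ j ∈ Finset.range t, 2 ^ (6 * j + 8)) + 1) / 2 =
      (∑ μ ∈ Finset.Icc 1 (3 * t + 2 + 1), 2 ^ (2 * μ - 1)) - 1 := by
  have hk := key t
  set A := ∑ j ∈ Finset.range t, 2 ^ (6 * j + 8) with hA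
  set S := ∑ μ ∈ Finset.Icc 1 (3 * t + 2 + 1), 2 ^ (2 * μ - 1) with hS
  have hSeven : 2 ∣ S := by
    apply Finset.dvd_sum
    intro μ hμ
    have : 1 ≤ μ := (Finset.mem_Icc.mp hμ).1
    exact dvd_pow_self 2 (by omega)
  obtain ⟨m, hm⟩ := hSeven
  refine ⟨Nat.odd_iff.mpr (by omega), ?_, by omega⟩
  have heq : 3 * (27 + 7 * A) + 1 = 2 * (S - 1) := by omega
  have hodd : ¬ 2 ∣ (S - 1) := by omega
  rw [heq]
  haveI : Fact (Nat.Prime 2) := ⟨Nat.prime_two⟩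
  rw [padicValNat.mul (by norm_num) (by omega), padicValNat.self one_lt_two,
    padicValNat.eq_zero_of_not_dvd hodd]
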